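/- Let C = {x1,...,x8} be an 8-element cap in (Z/2Z)^n such that x8 = x1 + x2 + ... + x7 (so the sum of all eight elements is zero). Then every exclude point of C has multiplicity exactly 1, and consequently qc(C) has exactly 8 + C(8,3) = 64 elements. -/
import Mathlib


def IsCap {n : ℕ} (S : Set (Fin n → ZMod 2)) : Prop :=
  ∀ a ∈ S, ∀ b ∈ S, ∀ c ∈ S, ∀ d ∈ S,
    a ≠ b → a ≠ c → a ≠ d → b ≠ c → b ≠ d → c ≠ d → a + b + c + d ≠ 0

def excl {n : ℕ} (S : Finset (Fin n → ZMod 2)) : Finset (Fin n → ZMod 2) :=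
  (S.powersetCard 3).image (fun t => t.sum id)

def mult {n : ℕ} (S : Finset (Fin n → ZMod 2)) (p : Fin n → ZMod 2) : ℕ :=
  ((S.powersetCard 3).filter (fun t => t.sum id = p)).card

lemma pi_add_self {n : ℕ} (x : Fin n → ZMod 2) : x + x = 0 := by
  funext i; exact CharTwo.add_self_eq_zero _

lemma pi_eq_of_add_eq_zero {n : ℕ} {x y : Fin n → ZMod 2} (h : x + y = 0) : x = y := by
  have : x + (y + y) = (x + y) + y := by ring
  rw [pi_add_self, h, zero_add, add_zero] at this
  exact this

lemma card_eq_four {α : Type*} [DecidableEq α] {u : Finset α} (h : u.card = 4) :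
    ∃ a b c d, a ≠ b ∧ a ≠ c ∧ a ≠ d ∧ b ≠ c ∧ b ≠ d ∧ c ≠ d ∧ u = {a, b, c, d} := by
  rw [show (4:ℕ) = 3 + 1 from rfl, Finset.card_eq_succ] at h
  obtain ⟨a, t, hat, hins, ht⟩ := h
  obtain ⟨b, c, d, hbc, hbd, hcd, rfl⟩ := Finset.card_eq_three.mp ht
  simp only [Finset.mem_insert, Finset.mem_singleton, not_or] at hat
  exact ⟨a, b, c, d, hat.1, hat.2.1, hat.2.2, hbc, hbd, hcd, hins.symm⟩

/-- A subset of the cap of even positive cardinality at most 6 cannot sum to zero. -/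
lemma no_small_zero_sum {n : ℕ} (C : Finset (Fin n → ZMod 2))
    (hC : IsCap (C : Set (Fin n → ZMod 2))) (hcard : C.card = 8)
    (hCsum : C.sum id = 0)
    {u : Finset (Fin n → ZMod 2)} (hsub : u ⊆ C) (hne : u.Nonempty)
    (hcu : u.card = 2 ∨ u.card = 4 ∨ u.card = 6) (hzero : u.sum id = 0) : False := by
  have key2 : ∀ v : Finset (Fin n → ZMod 2), v.card = 2 → v.sum id ≠ 0 := by
    intro v hv
    obtain ⟨a, b, hab, rfl⟩ := Finset.card_eq_two.mp hv
    rw [Finset.sum_insert (by simpa using hab), Finset.sum_singleton]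
    exact fun h => hab (pi_eq_of_add_eq_zero h)
  rcases hcu with h2 | h4 | h6
  · exact key2 u h2 hzero
  · obtain ⟨a, b, c, d, hab, hac, had, hbc, hbd, hcd, rfl⟩ := card_eq_four h4
    have ha : a ∈ C := hsub (by simp)
    have hb : b ∈ C := hsub (by simp)
    have hc : c ∈ C := hsub (by simp)
    have hd : d ∈ C := hsub (by simp)
    refine hC a ha b hb c hc d hd hab hac had hbc hbd hcd ?_
    rw [show ({a, b, c, d} : Finset _).sum id = a + b + c + d by
      rw [Finset.sum_insert (by simp [hab, hac, had]),
        Finset.sum_insert (by simp [hbc, hbd]),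
        Finset.sum_insert (by simpa using hcd), Finset.sum_singleton]
      simp only [id_eq]; ring] at hzero
    exact hzero
  · have hw : (C \ u).sum id = 0 := by
      have := Finset.sum_sdiff (f := id) hsub
      rw [hzero, add_zero] at this
      rw [this, hCsum]
    have hwc : (C \ u).card = 2 := by
      rw [Finset.card_sdiff_of_subset hsub, hcard, h6]
    exact key2 _ hwc hw

/-- sums over 3-subsets of the cap are injective. -/
lemma sum_inj {n : ℕ} (C : Finset (Fin n → ZMod 2))
    (hC : IsCap (C : Set (Fin n → ZMod 2))) (hcard : C.card = 8)
    (hCsum : C.sum id = 0)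
    {t s : Finset (Fin n → ZMod 2)} (ht : t ∈ C.powersetCard 3)
    (hs : s ∈ C.powersetCard 3) (heq : t.sum id = s.sum id) : t = s := by
  rw [Finset.mem_powersetCard] at ht hs
  by_contra hne
  set u : Finset (Fin n → ZMod 2) := (t ∪ s) \ (t ∩ s) with hu
  have hsub : u ⊆ C := fun x hx => by
    have := (Finset.mem_sdiff.mp hx).1
    rcases Finset.mem_union.mp this with h | h
    · exact ht.1 h
    · exact hs.1 h
  have hsumu : u.sum id = 0 := by
    have h1 := Finset.sum_sdiff (f := id)
      (Finset.inter_subset_union : t ∩ s ⊆ t ∪ s)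
    have h2 := Finset.sum_union_inter (s₁ := t) (s₂ := s) (f := id)
    have h3 : u.sum id + (t ∩ s).sum id + (t ∩ s).sum id = t.sum id + s.sum id := by
      rw [h1, h2]
    rw [heq, pi_add_self] at h3
    calc u.sum id = u.sum id + ((t ∩ s).sum id + (t ∩ s).sum id) := by
            rw [pi_add_self]; ring
      _ = 0 := by rw [← add_assoc, h3]
  have hui := Finset.card_union_add_card_inter t s
  have hus : (t ∩ s).card ≤ (t ∪ s).card := Finset.card_le_card Finset.inter_subset_union
  have hcu : u.card = (t ∪ s).card - (t ∩ s).card :=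
    Finset.card_sdiff_of_subset Finset.inter_subset_union
  have hine : t ∩ s ≠ t ∪ s := by
    intro h
    apply hne
    have h1 : t ⊆ s := fun x hx =>
      (Finset.mem_inter.mp (h ▸ Finset.mem_union_left s hx)).2
    have h2 : s ⊆ t := fun x hx =>
      (Finset.mem_inter.mp (h ▸ Finset.mem_union_right t hx)).1
    exact Finset.Subset.antisymm h1 h2
  have hlt : (t ∩ s).card < (t ∪ s).card :=
    Finset.card_lt_card (Finset.ssubset_iff_subset_ne.mpr ⟨Finset.inter_subset_union, hine⟩)
  have hunonempty : u.Nonempty := by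
    rw [← Finset.card_pos, hcu]; omega
  have hicard : (t ∩ s).card ≤ 3 := ht.2 ▸ Finset.card_le_card Finset.inter_subset_left
  refine no_small_zero_sum C hC hcard hCsum hsub hunonempty ?_ hsumu
  omega

theorem eight_cap_sum_zero {n : ℕ} (C : Finset (Fin n → ZMod 2))
    (hC : IsCap (C : Set (Fin n → ZMod 2))) (hcard : C.card = 8)
    (x₈ : Fin n → ZMod 2) (hx₈ : x₈ ∈ C) (hsum : x₈ = (C.erase x₈).sum id) :
    (∀ p ∈ excl C, mult C p = 1) ∧ (C ∪ excl C).card = 64 := by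
  have hCsum : C.sum id = 0 := by
    rw [← Finset.sum_erase_add C id hx₈, ← hsum]
    simp only [id_eq]
    exact pi_add_self x₈
  constructor
  · intro p hp
    obtain ⟨t, htmem, htsum⟩ := Finset.mem_image.mp hp
    have : (C.powersetCard 3).filter (fun s => s.sum id = p) = {t} := by
      apply Finset.eq_singleton_iff_unique_mem.mpr
      refine ⟨Finset.mem_filter.mpr ⟨htmem, htsum⟩, ?_⟩
      intro s hs
      obtain ⟨hsmem, hssum⟩ := Finset.mem_filter.mp hs
      exact sum_inj C hC hcard hCsum hsmem htmem (by rw [hssum, htsum])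
    rw [mult, this, Finset.card_singleton]
  · have hdisj : Disjoint C (excl C) := by
      rw [Finset.disjoint_left]
      intro p hpC hpE
      obtain ⟨t, htmem, htsum⟩ := Finset.mem_image.mp hpE
      rw [Finset.mem_powersetCard] at htmem
      obtain ⟨a, b, c, hab, hac, hbc, rfl⟩ := Finset.card_eq_three.mp htmem.2
      have ha : a ∈ C := htmem.1 (by simp)
      have hb : b ∈ C := htmem.1 (by simp)
      have hc : c ∈ C := htmem.1 (by simp)
      have hsum3 : a + b + c = p := by
        rw [← htsum, Finset.sum_insert (by simp [hab, hac]),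
          Finset.sum_insert (by simpa using hbc), Finset.sum_singleton]
        simp only [id_eq]; ring
      by_cases hpa : p = a
      · refine hbc (pi_eq_of_add_eq_zero ?_)
        calc b + c = a + a + (b + c) := by rw [pi_add_self, zero_add]
          _ = a + (a + b + c) := by ring
          _ = a + p := by rw [hsum3]
          _ = 0 := by rw [hpa, pi_add_self]
      · by_cases hpb : p = b
        · refine hac (pi_eq_of_add_eq_zero ?_)
          calc a + c = b + b + (a + c) := by rw [pi_add_self, zero_add]
            _ = b + (a + b + c) := by ring
            _ = b + p := by rw [hsum3]
            _ = 0 := by rw [hpb, pi_add_self]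
        · by_cases hpc : p = c
          · refine hab (pi_eq_of_add_eq_zero ?_)
            calc a + b = c + c + (a + b) := by rw [pi_add_self, zero_add]
              _ = c + (a + b + c) := by ring
              _ = c + p := by rw [hsum3]
              _ = 0 := by rw [hpc, pi_add_self]
          · refine hC a ha b hb c hc p hpC hab hac (Ne.symm hpa) hbc (Ne.symm hpb)
              (Ne.symm hpc) ?_
            rw [hsum3, pi_add_self]
    rw [Finset.card_union_of_disjoint hdisj, hcard]
    have : (excl C).card = 56 := by
      rw [excl, Finset.card_image_of_injOn
        (fun t ht s hs h => sum_inj C hC hcard hCsum ht hs h),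
        Finset.card_powersetCard, hcard]
      decide
    omega
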